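/- arXiv:1605.05463 — 13 statements merged into one kernel-verified Lean document; each statement's English description precedes it below -/
import Mathlib

section
/- If G is a finite group such that a²b² = b²a² and a³b³ = b³a³ for all a, b ∈ G, then G is abelian. -/
theorem squares_cubes_commute_finite_abelian (G : Type*) [Group G] [Finite G]
    (h2 : ∀ a b : G, a ^ 2 * b ^ 2 = b ^ 2 * a ^ 2)
    (h3 : ∀ a b : G, a ^ 3 * b ^ 3 = b ^ 3 * a ^ 3) :
    ∀ a b : G, a * b = b * a := by
  have C2 : ∀ a b : G, Commute (a ^ 2) (b ^ 2) := fun a b => h2 a b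
  have C3 : ∀ a b : G, Commute (a ^ 3) (b ^ 3) := fun a b => h3 a b
  -- any element that is a product of two squares and a product of two cubes is central
  have central : ∀ w : G, (∃ s t : G, w = s ^ 2 * t ^ 2) →
      (∃ u v : G, w = u ^ 3 * v ^ 3) → ∀ g : G, Commute w g := by
    rintro w ⟨s, t, rfl⟩ ⟨u, v, huv⟩ g
    have hsq : Commute (s ^ 2 * t ^ 2) (g ^ 2) := (C2 s g).mul_left (C2 t g)
    have hcu : Commute (s ^ 2 * t ^ 2) (g ^ 3) := by
      rw [huv]; exact (C3 u g).mul_left (C3 v g)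
    have hg : Commute (s ^ 2 * t ^ 2) (g ^ 3 * (g ^ 2)⁻¹) := hcu.mul_right hsq.inv_right
    have : g ^ 3 * (g ^ 2)⁻¹ = g := by group
    rwa [this] at hg
  intro x y
  set p := x ^ 3 with hp
  set q := y ^ 3 with hq
  set hh := (x ^ 2)⁻¹ with hhh
  set k := (y ^ 2)⁻¹ with hk
  -- c2el = [x⁻², y³],  del = [y⁻², x³] : both are central
  set c2el := x ^ 2 * (y ^ 3)⁻¹ * (x ^ 2)⁻¹ * y ^ 3 with hc2el
  set del := y ^ 2 * (x ^ 3)⁻¹ * (y ^ 2)⁻¹ * x ^ 3 with hdel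
  have c2cent : ∀ g : G, Commute c2el g := by
    apply central
    · exact ⟨x, (y ^ 3)⁻¹ * x⁻¹ * y ^ 3, by rw [hc2el]; simp only [pow_succ, pow_zero, one_mul]; group⟩
    · exact ⟨x ^ 2 * y⁻¹ * (x ^ 2)⁻¹, y, by rw [hc2el]; simp only [pow_succ, pow_zero, one_mul]; group⟩
  have dcent : ∀ g : G, Commute del g := by
    apply central
    · exact ⟨y, (x ^ 3)⁻¹ * y⁻¹ * x ^ 3, by rw [hdel]; simp only [pow_succ, pow_zero, one_mul]; group⟩
    · exact ⟨y ^ 2 * x⁻¹ * (y ^ 2)⁻¹, x, by rw [hdel]; simp only [pow_succ, pow_zero, one_mul]; group⟩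
  -- x*y = p*q*hh*k*c2el  and  y*x = p*q*hh*k*del
  have hxy : x * y = p * q * hh * k * c2el := by
    have e1 : x * y = p * q * hh * c2el * k := by
      rw [hp, hq, hhh, hk, hc2el]; group
    rw [e1, mul_assoc (p * q * hh) c2el k, (c2cent k).eq, ← mul_assoc]
  have hyx : y * x = p * q * hh * k * del := by
    have e1 : y * x = q * p * k * del * hh := by
      rw [hp, hq, hhh, hk, hdel]; group
    have e2 : q * p = p * q := (C3 x y).symm.eq
    have e3 : del * hh = hh * del := (dcent hh).eq
    have e4 : k * hh = hh * k := ((C2 x y).inv_left.inv_right.symm).eq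
    calc y * x = q * p * k * del * hh := e1
      _ = q * p * (k * (del * hh)) := by group
      _ = q * p * (k * (hh * del)) := by rw [e3]
      _ = q * p * (k * hh * del) := by group
      _ = q * p * (hh * k * del) := by rw [e4]
      _ = p * q * (hh * k * del) := by rw [e2]
      _ = p * q * hh * k * del := by group
  -- the commutator cc = [x,y] is central
  set cc := x⁻¹ * y⁻¹ * x * y with hcc
  have hccval : cc = del⁻¹ * c2el := by
    have h' : cc = (y * x)⁻¹ * (x * y) := by rw [hcc]; group
    rw [h', hxy, hyx]; group
  have cccent : ∀ g : G, Commute cc g := by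
    intro g
    rw [hccval]
    exact ((dcent g).inv_left).mul_left (c2cent g)
  have hcx : Commute x cc := (cccent x).symm
  -- conjugation formulas
  have e : y⁻¹ * x * y = x * cc := by rw [hcc]; group
  have e2 : y⁻¹ * x ^ 2 * y = x ^ 2 * cc ^ 2 := by
    have h' : y⁻¹ * x ^ 2 * y = (y⁻¹ * x * y) ^ 2 := by simp only [pow_succ, pow_zero, one_mul]; group
    rw [h', e, hcx.mul_pow]
  have e3 : y⁻¹ * x ^ 3 * y = x ^ 3 * cc ^ 3 := by
    have h' : y⁻¹ * x ^ 3 * y = (y⁻¹ * x * y) ^ 3 := by simp only [pow_succ, pow_zero, one_mul]; group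
    rw [h', e, hcx.mul_pow]
  have e4 : (y ^ 2)⁻¹ * x ^ 2 * y ^ 2 = x ^ 2 * cc ^ 4 := by
    calc (y ^ 2)⁻¹ * x ^ 2 * y ^ 2 = y⁻¹ * (y⁻¹ * x ^ 2 * y) * y := by simp only [pow_succ, pow_zero, one_mul]; group
      _ = y⁻¹ * (x ^ 2 * cc ^ 2) * y := by rw [e2]
      _ = y⁻¹ * x ^ 2 * (cc ^ 2 * y) := by group
      _ = y⁻¹ * x ^ 2 * (y * cc ^ 2) := by rw [((cccent y).pow_left 2).eq]
      _ = (y⁻¹ * x ^ 2 * y) * cc ^ 2 := by group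
      _ = x ^ 2 * cc ^ 2 * cc ^ 2 := by rw [e2]
      _ = x ^ 2 * cc ^ 4 := by group
  have e9 : (y ^ 3)⁻¹ * x ^ 3 * y ^ 3 = x ^ 3 * cc ^ 9 := by
    calc (y ^ 3)⁻¹ * x ^ 3 * y ^ 3
        = y⁻¹ * (y⁻¹ * (y⁻¹ * x ^ 3 * y) * y) * y := by simp only [pow_succ, pow_zero, one_mul]; group
      _ = y⁻¹ * (y⁻¹ * (x ^ 3 * cc ^ 3) * y) * y := by rw [e3]
      _ = y⁻¹ * (y⁻¹ * x ^ 3 * (cc ^ 3 * y)) * y := by group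
      _ = y⁻¹ * (y⁻¹ * x ^ 3 * (y * cc ^ 3)) * y := by rw [((cccent y).pow_left 3).eq]
      _ = y⁻¹ * (y⁻¹ * x ^ 3 * y) * (cc ^ 3 * y) := by group
      _ = y⁻¹ * (x ^ 3 * cc ^ 3) * (y * cc ^ 3) := by rw [e3, ((cccent y).pow_left 3).eq]
      _ = y⁻¹ * x ^ 3 * (cc ^ 3 * y) * cc ^ 3 := by group
      _ = y⁻¹ * x ^ 3 * (y * cc ^ 3) * cc ^ 3 := by rw [((cccent y).pow_left 3).eq]
      _ = (y⁻¹ * x ^ 3 * y) * cc ^ 3 * cc ^ 3 := by group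
      _ = x ^ 3 * cc ^ 3 * cc ^ 3 * cc ^ 3 := by rw [e3]
      _ = x ^ 3 * cc ^ 9 := by group
  have t4 : (y ^ 2)⁻¹ * x ^ 2 * y ^ 2 = x ^ 2 := by
    rw [show (y ^ 2)⁻¹ * x ^ 2 * y ^ 2 = (y ^ 2)⁻¹ * (x ^ 2 * y ^ 2) from by group,
      h2 x y]; group
  have t9 : (y ^ 3)⁻¹ * x ^ 3 * y ^ 3 = x ^ 3 := by
    rw [show (y ^ 3)⁻¹ * x ^ 3 * y ^ 3 = (y ^ 3)⁻¹ * (x ^ 3 * y ^ 3) from by group,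
      h3 x y]; group
  have hc4 : cc ^ 4 = 1 := by
    have := t4.symm.trans e4
    have h' : x ^ 2 * cc ^ 4 = x ^ 2 * 1 := by rw [mul_one]; exact this.symm
    exact mul_left_cancel h'
  have hc9 : cc ^ 9 = 1 := by
    have := t9.symm.trans e9
    have h' : x ^ 3 * cc ^ 9 = x ^ 3 * 1 := by rw [mul_one]; exact this.symm
    exact mul_left_cancel h'
  have hc1 : cc = 1 := by
    have h' : cc = cc ^ 9 * ((cc ^ 4) ^ 2)⁻¹ := by group
    rw [hc9, hc4] at h'
    simpa using h'
  have final : x * y = y * x * cc := by rw [hcc]; group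
  rw [final, hc1, mul_one]
end

section
/- Let m, n be coprime natural numbers. If G is a finite group such that aᵐbᵐ = bᵐaᵐ and aⁿbⁿ = bⁿaⁿ for all a, b ∈ G, then G is abelian. -/
private lemma conj_pow_aux {G : Type*} [Group G] (g h : G) (k : ℕ) :
    (g⁻¹ * h * g) ^ k = g⁻¹ * h ^ k * g := by
  induction k with
  | zero => simp
  | succ k ih => rw [pow_succ, pow_succ, ih]; group

private lemma pow_comm_left {G : Type*} [Group G] (x y z : G)
    (hz : ∀ c : G, Commute z c) (hxy : x * y = y * x * z) :
    ∀ k : ℕ, x ^ k * y = y * x ^ k * z ^ k := by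
  intro k
  induction k with
  | zero => simp
  | succ k ih =>
    calc x ^ (k + 1) * y = x * (x ^ k * y) := by rw [pow_succ']; group
    _ = x * (y * x ^ k * z ^ k) := by rw [ih]
    _ = (x * y) * (x ^ k * z ^ k) := by group
    _ = (y * x * z) * (x ^ k * z ^ k) := by rw [hxy]
    _ = y * x * (z * x ^ k) * z ^ k := by group
    _ = y * x * (x ^ k * z) * z ^ k := by rw [hz (x ^ k)]
    _ = y * (x * x ^ k) * (z * z ^ k) := by group
    _ = y * x ^ (k + 1) * z ^ (k + 1) := by rw [← pow_succ', ← pow_succ']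

private lemma pow_comm_right {G : Type*} [Group G] (x y z : G)
    (hz : ∀ c : G, Commute z c) (hxy : x * y = y * x * z) :
    ∀ k : ℕ, x * y ^ k = y ^ k * x * z ^ k := by
  intro k
  induction k with
  | zero => simp
  | succ k ih =>
    calc x * y ^ (k + 1) = (x * y ^ k) * y := by rw [pow_succ]; group
    _ = (y ^ k * x * z ^ k) * y := by rw [ih]
    _ = y ^ k * x * (z ^ k * y) := by group
    _ = y ^ k * x * (y * z ^ k) := by rw [← (hz y).pow_left k]
    _ = y ^ k * (x * y) * z ^ k := by group
    _ = y ^ k * (y * x * z) * z ^ k := by rw [hxy]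
    _ = (y ^ k * y) * x * (z * z ^ k) := by group
    _ = y ^ (k + 1) * x * z ^ (k + 1) := by rw [← pow_succ, ← pow_succ']

theorem coprime_powers_commute_finite_abelian (G : Type*) [Group G] [Finite G]
    (m n : ℕ) (hmn : Nat.Coprime m n)
    (hm : ∀ a b : G, a ^ m * b ^ m = b ^ m * a ^ m)
    (hn : ∀ a b : G, a ^ n * b ^ n = b ^ n * a ^ n) :
    ∀ a b : G, a * b = b * a := by
  obtain ⟨s, t, hst⟩ : ∃ s t : ℤ, (m : ℤ) * s + (n : ℤ) * t = 1 := by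
    refine ⟨Nat.gcdA m n, Nat.gcdB m n, ?_⟩
    have h := Nat.gcd_eq_gcd_ab m n
    have h1 : (Nat.gcd m n : ℤ) = 1 := by exact_mod_cast congrArg (Nat.cast (R := ℤ)) hmn
    omega
  -- decomposition of any element via Bezout
  have decomp : ∀ c : G, (c ^ s) ^ m * (c ^ t) ^ n = c := by
    intro c
    have e1 : (c ^ s) ^ m = c ^ ((m : ℤ) * s) := by
      rw [← zpow_natCast (c ^ s) m, ← zpow_mul, mul_comm]
    have e2 : (c ^ t) ^ n = c ^ ((n : ℤ) * t) := by
      rw [← zpow_natCast (c ^ t) n, ← zpow_mul, mul_comm]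
    rw [e1, e2, ← zpow_add, hst, zpow_one]
  -- anything commuting with all m-th and all n-th powers is central
  have central_of : ∀ z : G, (∀ c : G, Commute z (c ^ m)) →
      (∀ c : G, Commute z (c ^ n)) → ∀ c : G, Commute z c := by
    intro z h1 h2 c
    have := (h1 (c ^ s)).mul_right (h2 (c ^ t))
    rwa [decomp c] at this
  -- a ^ (m * n) is central
  have hA : ∀ a c : G, Commute (a ^ (m * n)) c := by
    intro a
    refine central_of _ (fun c => ?_) (fun c => ?_)
    · rw [pow_mul']; exact hm (a ^ n) c
    · rw [pow_mul]; exact hn (a ^ m) c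
  -- key : m-th powers commute with n-th powers
  have key : ∀ a b : G, Commute (a ^ m) (b ^ n) := by
    intro a b
    set x := a ^ m with hxdef
    set y := b ^ n with hydef
    set z := x⁻¹ * y⁻¹ * x * y with hzdef
    have hxy : x * y = y * x * z := by rw [hzdef]; group
    -- z is central
    have hzc : ∀ c : G, Commute z c := by
      refine central_of z (fun c => ?_) (fun c => ?_)
      · have e1 : z = (a⁻¹) ^ m * (y⁻¹ * a * y) ^ m := by
          rw [conj_pow_aux, inv_pow, ← hxdef, hzdef]; group
        rw [e1]
        exact Commute.mul_left (hm a⁻¹ c) (hm (y⁻¹ * a * y) c)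
      · have e2 : z = (x⁻¹ * b⁻¹ * x) ^ n * b ^ n := by
          rw [conj_pow_aux, inv_pow, ← hydef, hzdef]
        rw [e2]
        exact Commute.mul_left (hn (x⁻¹ * b⁻¹ * x) c) (hn b c)
    -- z ^ n = 1
    have hzn : z ^ n = 1 := by
      have h1 := pow_comm_left x y z hzc hxy n
      have h2 : x ^ n * y = y * x ^ n := by
        rw [hxdef, ← pow_mul]; exact hA a y
      rw [h2] at h1
      exact left_eq_mul.mp h1
    -- z ^ m = 1
    have hzm : z ^ m = 1 := by
      have h1 := pow_comm_right x y z hzc hxy m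
      have h2 : x * y ^ m = y ^ m * x := by
        rw [hydef, ← pow_mul, mul_comm n m]
        exact (hA b x).symm.eq
      rw [h2] at h1
      exact left_eq_mul.mp h1
    -- z = 1
    have hz1 : z = 1 := by
      have e1 : z ^ ((m : ℤ) * s) = 1 := by
        rw [zpow_mul, zpow_natCast, hzm, one_zpow]
      have e2 : z ^ ((n : ℤ) * t) = 1 := by
        rw [zpow_mul, zpow_natCast, hzn, one_zpow]
      have : z ^ ((1 : ℤ)) = 1 := by rw [← hst, zpow_add, e1, e2, one_mul]
      simpa using this
    have : x * y = y * x := by rw [hxy, hz1, mul_one]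
    exact this
  -- m-th powers are central
  have keym : ∀ a b : G, Commute (a ^ m) b := by
    intro a b
    have := Commute.mul_right (hm a (b ^ s)) (key a (b ^ t))
    rwa [decomp b] at this
  -- n-th powers are central
  have keyn : ∀ a b : G, Commute (a ^ n) b := by
    intro a b
    have := Commute.mul_right ((key (b ^ s) a).symm) (hn a (b ^ t) : Commute (a ^ n) ((b ^ t) ^ n))
    rwa [decomp b] at this
  intro a b
  have := Commute.mul_left (keym (a ^ s) b) (keyn (a ^ t) b)
  rwa [decomp a] at this
end

section
/- Let m, n be coprime natural numbers and G a group satisfying aᵐbᵐ = bᵐaᵐ and aⁿbⁿ = bⁿaⁿ for all a, b ∈ G. Let k be a natural number coprime to at least one of m or n. Then H = {x ∈ G : xᵏ = e} is a normal abelian subgroup of G (i.e., H is a subgroup, H is normal, and any two elements of H commute). -/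
private lemma aux_comm {G : Type*} [Group G] (n k : ℕ)
    (hn : ∀ a b : G, a ^ n * b ^ n = b ^ n * a ^ n)
    (hk : Nat.Coprime k n) :
    ∀ x y : G, x ^ k = 1 → y ^ k = 1 → x * y = y * x := by
  have hpow : ∀ x : G, x ^ k = 1 → ∃ g : G, g ^ n = x := by
    intro x hx
    refine ⟨x ^ (Nat.gcdB k n), ?_⟩
    have hbezout : (k : ℤ) * Nat.gcdA k n + (n : ℤ) * Nat.gcdB k n = 1 := by
      have := Nat.gcd_eq_gcd_ab k n
      rw [hk] at this
      omega
    calc (x ^ (Nat.gcdB k n)) ^ n = x ^ ((Nat.gcdB k n) * n) := by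
          rw [← zpow_natCast (x ^ (Nat.gcdB k n)) n, ← zpow_mul]
      _ = x ^ ((k : ℤ) * Nat.gcdA k n + (n : ℤ) * Nat.gcdB k n) := by
          rw [mul_comm (n : ℤ)]
          rw [zpow_add, zpow_mul x (k:ℤ), zpow_natCast, hx, one_zpow, one_mul]
      _ = x := by rw [hbezout, zpow_one]
  intro x y hx hy
  obtain ⟨g, hg⟩ := hpow x hx
  obtain ⟨h, hh⟩ := hpow y hy
  rw [← hg, ← hh]
  exact hn g h

theorem kth_roots_of_one_form_normal_abelian_subgroup (G : Type*) [Group G]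
    (m n : ℕ) (hmn : Nat.Coprime m n)
    (hm : ∀ a b : G, a ^ m * b ^ m = b ^ m * a ^ m)
    (hn : ∀ a b : G, a ^ n * b ^ n = b ^ n * a ^ n)
    (k : ℕ) (hk : Nat.Coprime k m ∨ Nat.Coprime k n) :
    ∃ H : Subgroup G, (∀ x : G, x ∈ H ↔ x ^ k = 1) ∧ H.Normal ∧
      ∀ x y : G, x ∈ H → y ∈ H → x * y = y * x := by
  have key : ∀ x y : G, x ^ k = 1 → y ^ k = 1 → x * y = y * x := by
    rcases hk with h | h
    · exact aux_comm m k hm h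
    · exact aux_comm n k hn h
  refine ⟨{
    carrier := {x | x ^ k = 1}
    one_mem' := one_pow k
    mul_mem' := fun {a b} ha hb => by
      have hc : Commute a b := key a b ha hb
      show (a * b) ^ k = 1
      rw [hc.mul_pow, ha, hb, one_mul]
    inv_mem' := fun {a} ha => by
      show a⁻¹ ^ k = 1
      rw [inv_pow, ha, inv_one] }, fun x => Iff.rfl, ⟨fun x hx g => ?_⟩, key⟩
  show (g * x * g⁻¹) ^ k = 1
  rw [conj_pow, hx, mul_one, mul_inv_cancel]
end

section
/- Let m, n be coprime natural numbers, G a group satisfying aᵐbᵐ = bᵐaᵐ and aⁿbⁿ = bⁿaⁿ for all a, b ∈ G, and k a natural number coprime to m. Then any two elements x, y ∈ G with xᵏ = e and yᵏ = e commute. -/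
theorem kth_roots_commute (G : Type*) [Group G]
    (m n : ℕ) (hmn : Nat.Coprime m n)
    (hm : ∀ a b : G, a ^ m * b ^ m = b ^ m * a ^ m)
    (hn : ∀ a b : G, a ^ n * b ^ n = b ^ n * a ^ n)
    (k : ℕ) (hk : Nat.Coprime k m)
    (x y : G) (hx : x ^ k = 1) (hy : y ^ k = 1) :
    x * y = y * x := by
  set s : ℤ := Int.gcdA k m
  set t : ℤ := Int.gcdB k m
  have hbez : (k : ℤ) * s + (m : ℤ) * t = 1 := by
    have h := Int.gcd_eq_gcd_ab (k : ℤ) (m : ℤ)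
    simpa [Int.gcd_natCast_natCast, hk.gcd_eq_one] using h.symm
  have key : ∀ z : G, z ^ k = 1 → (z ^ t) ^ m = z := by
    intro z hz
    have hzk : z ^ (k : ℤ) = 1 := by rw [zpow_natCast, hz]
    calc (z ^ t) ^ m = z ^ ((m : ℤ) * t) := by
          rw [← zpow_natCast (z ^ t) m, ← zpow_mul, mul_comm]
      _ = z ^ ((k : ℤ) * s + (m : ℤ) * t) := by
          rw [zpow_add, zpow_mul z (k : ℤ) s, hzk, one_zpow, one_mul]
      _ = z := by rw [hbez, zpow_one]
  calc x * y = (x ^ t) ^ m * (y ^ t) ^ m := by rw [key x hx, key y hy]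
    _ = (y ^ t) ^ m * (x ^ t) ^ m := hm _ _
    _ = y * x := by rw [key x hx, key y hy]
end

section
/- Let G be a finite group and p a prime with p^α the exact power of p dividing |G|. If the set G_{p^α} = {x ∈ G : x^{p^α} = e} is a subgroup of G, then G has a unique Sylow p-subgroup P, and P = G_{p^α}. -/
theorem subgroup_of_p_power_roots_is_unique_sylow (G : Type*) [Group G] [Finite G]
    (p : ℕ) [Fact p.Prime] (α : ℕ) (hα : α = (Nat.card G).factorization p)
    (hH : ∃ H : Subgroup G, (H : Set G) = {x : G | x ^ p ^ α = 1}) :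
    (∀ P Q : Sylow p G, P = Q) ∧
      ∀ P : Sylow p G, ((P : Subgroup G) : Set G) = {x : G | x ^ p ^ α = 1} := by
  obtain ⟨H, hHset⟩ := hH
  have hmem : ∀ x : G, x ∈ H ↔ x ^ p ^ α = 1 := by
    intro x
    constructor
    · intro hx
      have : x ∈ (H : Set G) := hx
      rw [hHset] at this
      exact this
    · intro hx
      show x ∈ (H : Set G)
      rw [hHset]; exact hx
  have hHp : IsPGroup p H := by
    intro g
    exact ⟨α, Subtype.ext (by push_cast; exact (hmem g).1 g.2)⟩
  have hcard : ∀ P : Sylow p G, Nat.card (P : Subgroup G) = p ^ α := by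
    intro P
    rw [P.card_eq_multiplicity, hα]
  have hPle : ∀ P : Sylow p G, (P : Subgroup G) ≤ H := by
    intro P x hx
    rw [hmem]
    have h1 : (⟨x, hx⟩ : (P : Subgroup G)) ^ p ^ α = 1 := by
      rw [← hcard P]; exact pow_card_eq_one'
    have := congrArg (Subtype.val) h1
    push_cast at this
    exact this
  obtain ⟨Q, hQ⟩ := hHp.exists_le_sylow
  have hHQ : H = Q := le_antisymm hQ (hPle Q)
  have key : ∀ P : Sylow p G, (P : Subgroup G) = H := by
    intro P
    refine Subgroup.eq_of_le_of_card_ge (hPle P) ?_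
    rw [hcard P, hHQ, hcard Q]
  constructor
  · intro P Q'
    exact Sylow.ext (by rw [key P, key Q'])
  · intro P
    rw [key P, hHset]
end

section
/- Let m, n be coprime natural numbers and G a finite group satisfying aᵐbᵐ = bᵐaᵐ and aⁿbⁿ = bⁿaⁿ for all a, b ∈ G. Then for every prime p dividing |G|, G has a unique (hence normal) Sylow p-subgroup. -/
open scoped commutatorElement

/-- Key lemma: under property P(m,n) with coprime m, n, all commutators are central,
so the group is nilpotent of class at most 2. -/
theorem isNilpotent_of_coprime_powers_commute (G : Type*) [Group G]
    (m n : ℕ) (hmn : Nat.Coprime m n)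
    (hm : ∀ a b : G, a ^ m * b ^ m = b ^ m * a ^ m)
    (hn : ∀ a b : G, a ^ n * b ^ n = b ^ n * a ^ n) :
    Group.IsNilpotent G := by
  -- the sets of m-th and n-th powers
  set Sm : Set G := {x | ∃ a : G, a ^ m = x} with hSm
  set Sn : Set G := {x | ∃ a : G, a ^ n = x} with hSn
  set A : Subgroup G := Subgroup.closure Sm with hA
  set B : Subgroup G := Subgroup.closure Sn with hB
  -- elements of A commute with each other, likewise B
  have hcommSm : ∀ x ∈ Sm, ∀ y ∈ Sm, x * y = y * x := by
    rintro x ⟨a, rfl⟩ y ⟨b, rfl⟩; exact hm a b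
  have hcommSn : ∀ x ∈ Sn, ∀ y ∈ Sn, x * y = y * x := by
    rintro x ⟨a, rfl⟩ y ⟨b, rfl⟩; exact hn a b
  have hAcomm : ∀ x ∈ A, ∀ y ∈ A, x * y = y * x := fun x hx y hy =>
    Set.centralizer_centralizer_comm_of_comm hcommSm x
      (Subgroup.closure_le_centralizer_centralizer Sm hx) y
      (Subgroup.closure_le_centralizer_centralizer Sm hy)
  have hBcomm : ∀ x ∈ B, ∀ y ∈ B, x * y = y * x := fun x hx y hy =>
    Set.centralizer_centralizer_comm_of_comm hcommSn x
      (Subgroup.closure_le_centralizer_centralizer Sn hx) y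
      (Subgroup.closure_le_centralizer_centralizer Sn hy)
  -- A and B are normal
  have hnormal : ∀ (k : ℕ) (x g : G), x ∈ Subgroup.closure {x : G | ∃ a : G, a ^ k = x} →
      g * x * g⁻¹ ∈ Subgroup.closure {x : G | ∃ a : G, a ^ k = x} := by
    intro k x g hx
    induction hx using Subgroup.closure_induction with
    | mem y hy =>
      obtain ⟨a, rfl⟩ := hy
      exact Subgroup.subset_closure ⟨g * a * g⁻¹, by rw [conj_pow]⟩
    | one => simpa using Subgroup.one_mem _
    | mul y z _ _ hy hz =>
      have : g * (y * z) * g⁻¹ = (g * y * g⁻¹) * (g * z * g⁻¹) := by group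
      rw [this]; exact Subgroup.mul_mem _ hy hz
    | inv y _ hy =>
      have : g * y⁻¹ * g⁻¹ = (g * y * g⁻¹)⁻¹ := by group
      rw [this]; exact Subgroup.inv_mem _ hy
  have hAnorm : ∀ x ∈ A, ∀ g : G, g * x * g⁻¹ ∈ A := fun x hx g => hnormal m x g hx
  have hBnorm : ∀ x ∈ B, ∀ g : G, g * x * g⁻¹ ∈ B := fun x hx g => hnormal n x g hx
  -- Bezout decomposition: every g is a product of an element of A and an element of B
  obtain ⟨u, v, huv⟩ : ∃ u v : ℤ, u * m + v * n = 1 := by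
    obtain ⟨u, v, h⟩ := (Nat.isCoprime_iff_coprime.mpr hmn)
    exact ⟨u, v, h⟩
  have hdecomp : ∀ g : G, ∃ x ∈ A, ∃ y ∈ B, g = x * y := by
    intro g
    refine ⟨(g ^ u) ^ m, Subgroup.subset_closure ⟨g ^ u, rfl⟩,
            (g ^ v) ^ n, Subgroup.subset_closure ⟨g ^ v, rfl⟩, ?_⟩
    have : (g ^ u) ^ m * (g ^ v) ^ n = g ^ (u * m + v * n) := by
      rw [← zpow_natCast (g ^ u) m, ← zpow_natCast (g ^ v) n, ← zpow_mul, ← zpow_mul, ← zpow_add]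
    rw [this, huv, zpow_one]
  -- elements of A ∩ B are central
  have hABcenter : ∀ z : G, z ∈ A → z ∈ B → z ∈ Subgroup.center G := by
    intro z hzA hzB
    rw [Subgroup.mem_center_iff]
    intro g
    obtain ⟨x, hx, y, hy, rfl⟩ := hdecomp g
    have h1 : x * z = z * x := hAcomm x hx z hzA
    have h2 : y * z = z * y := hBcomm y hy z hzB
    rw [mul_assoc, h2, ← mul_assoc, h1, mul_assoc]
  -- commutators of elements of A with elements of B are central
  have hABcomm : ∀ x ∈ A, ∀ y ∈ B, ⁅x, y⁆ ∈ Subgroup.center G := by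
    intro x hx y hy
    refine hABcenter _ ?_ ?_
    · have : ⁅x, y⁆ = x * (y * x⁻¹ * y⁻¹) := by group
      rw [this]
      exact Subgroup.mul_mem _ hx (hAnorm x⁻¹ (Subgroup.inv_mem _ hx) y)
    · have : ⁅x, y⁆ = (x * y * x⁻¹) * y⁻¹ := by group
      rw [this]
      exact Subgroup.mul_mem _ (hBnorm y hy x) (Subgroup.inv_mem _ hy)
  -- hence every commutator is central
  have hcentral : ∀ g h : G, ⁅g, h⁆ ∈ Subgroup.center G := by
    intro g h
    set Z := Subgroup.center G
    let π : G →* G ⧸ Z := QuotientGroup.mk' Z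
    have hker : ∀ w : G, w ∈ Z → π w = 1 := by
      intro w hw
      rwa [QuotientGroup.mk'_apply, QuotientGroup.eq_one_iff]
    have key : π g * π h = π h * π g := by
      obtain ⟨x1, hx1, y1, hy1, rfl⟩ := hdecomp g
      obtain ⟨x2, hx2, y2, hy2, rfl⟩ := hdecomp h
      have cxx : Commute (π x1) (π x2) := by
        unfold Commute SemiconjBy
        rw [← map_mul, ← map_mul, hAcomm x1 hx1 x2 hx2]
      have cyy : Commute (π y1) (π y2) := by
        unfold Commute SemiconjBy
        rw [← map_mul, ← map_mul, hBcomm y1 hy1 y2 hy2]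
      have cxy : ∀ x ∈ A, ∀ y ∈ B, Commute (π x) (π y) := by
        intro x hx y hy
        rw [← commutatorElement_eq_one_iff_commute, ← map_commutatorElement]
        exact hker _ (hABcomm x hx y hy)
      have c11 : Commute (π x1) (π y1) := cxy x1 hx1 y1 hy1
      have c12 : Commute (π x1) (π y2) := cxy x1 hx1 y2 hy2
      have c21 : Commute (π x2) (π y1) := cxy x2 hx2 y1 hy1
      have c22 : Commute (π x2) (π y2) := cxy x2 hx2 y2 hy2
      have : Commute (π (x1 * y1)) (π (x2 * y2)) := by
        rw [map_mul, map_mul]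
        exact (cxx.mul_right c12).mul_left ((c21.symm.mul_right cyy))
      exact this
    have : π ⁅g, h⁆ = 1 := by
      rw [map_commutatorElement, commutatorElement_eq_one_iff_mul_comm]
      exact key
    rwa [QuotientGroup.mk'_apply, QuotientGroup.eq_one_iff] at this
  -- nilpotency of class ≤ 2
  refine ⟨⟨2, ?_⟩⟩
  rw [eq_top_iff]
  intro x _
  rw [show (2 : ℕ) = 1 + 1 from rfl, mem_upperCentralSeries_succ_iff]
  intro y
  have := hcentral x y
  rw [upperCentralSeries_one]
  simpa [commutatorElement_def] using this

theorem sylow_unique_of_coprime_powers_commute (G : Type*) [Group G] [Finite G]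
    (m n : ℕ) (hmn : Nat.Coprime m n)
    (hm : ∀ a b : G, a ^ m * b ^ m = b ^ m * a ^ m)
    (hn : ∀ a b : G, a ^ n * b ^ n = b ^ n * a ^ n)
    (p : ℕ) [Fact p.Prime] (hp : p ∣ Nat.card G) :
    ∀ P Q : Sylow p G, P = Q := by
  have hnil : Group.IsNilpotent G := isNilpotent_of_coprime_powers_commute G m n hmn hm hn
  intro P Q
  have hnorm : (P : Subgroup G).Normal :=
    Sylow.normal_of_all_max_subgroups_normal
      (fun _H hH => Subgroup.NormalizerCondition.normal_of_coatom _H normalizerCondition_of_isNilpotent hH) P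
  have : Unique (Sylow p G) := Sylow.unique_of_normal P hnorm
  exact Subsingleton.elim P Q
end

section
/- Let m, n be coprime natural numbers and G a finite group satisfying aᵐbᵐ = bᵐaᵐ and aⁿbⁿ = bⁿaⁿ for all a, b ∈ G. Then every Sylow p-subgroup of G is abelian. -/
theorem sylow_abelian_of_coprime_powers_commute (G : Type*) [Group G] [Finite G]
    (m n : ℕ) (hmn : Nat.Coprime m n)
    (hm : ∀ a b : G, a ^ m * b ^ m = b ^ m * a ^ m)
    (hn : ∀ a b : G, a ^ n * b ^ n = b ^ n * a ^ n)
    (p : ℕ) [Fact p.Prime] (P : Sylow p G) :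
    ∀ x y : G, x ∈ (P : Subgroup G) → y ∈ (P : Subgroup G) → x * y = y * x := by
  have hp : p.Prime := Fact.out
  obtain ⟨k, hk⟩ := IsPGroup.exists_card_eq P.2
  have key : ∀ j : ℕ, ¬ p ∣ j → (∀ a b : G, a ^ j * b ^ j = b ^ j * a ^ j) →
      ∀ x y : G, x ∈ (P : Subgroup G) → y ∈ (P : Subgroup G) → x * y = y * x := by
    intro j hj hcomm x y hx hy
    have hcop : (Nat.card ↥(P : Subgroup G)).Coprime j := by
      rw [hk]
      exact Nat.Coprime.pow_left _ ((hp.coprime_iff_not_dvd).mpr hj)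
    obtain ⟨a, ha⟩ := (powCoprime hcop).surjective ⟨x, hx⟩
    obtain ⟨b, hb⟩ := (powCoprime hcop).surjective ⟨y, hy⟩
    have ha' : (a : G) ^ j = x := congrArg Subtype.val ha
    have hb' : (b : G) ^ j = y := congrArg Subtype.val hb
    rw [← ha', ← hb']
    exact hcomm a b
  by_cases hpm : p ∣ m
  · exact key n (fun h => hp.one_lt.ne' (Nat.eq_one_of_dvd_coprimes hmn hpm h ▸ rfl)) hn
  · exact key m hpm hm
end

section
/- Let m, n be coprime natural numbers and G any group satisfying aᵐbᵐ = bᵐaᵐ and aⁿbⁿ = bⁿaⁿ for all a, b ∈ G. Then any two torsion elements of G commute. -/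
-- number theory: the cofactor of the m-part of k is coprime to m^k
lemma nt_coprime (k m : ℕ) (hk : k ≠ 0) (hm : m ≠ 0) :
    Nat.Coprime (k / Nat.gcd k (m ^ k)) (m ^ k) := by
  set β := Nat.gcd k (m ^ k) with hβ
  have hβdvd : β ∣ k := Nat.gcd_dvd_left _ _
  have hβpos : 0 < β := Nat.gcd_pos_of_pos_left _ (Nat.pos_of_ne_zero hk)
  have hαpos : 0 < k / β := Nat.div_pos (Nat.le_of_dvd (Nat.pos_of_ne_zero hk) hβdvd) hβpos
  by_contra hcon
  obtain ⟨p, pp, hpα, hpM⟩ := Nat.Prime.not_coprime_iff_dvd.mp hcon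
  have ppn : p.Prime := pp
  have hpm : p ∣ m := ppn.dvd_of_dvd_pow hpM
  have hfα : (k / β).factorization p = k.factorization p - β.factorization p := by
    rw [Nat.factorization_div hβdvd]; rfl
  have hfβ : β.factorization p = min (k.factorization p) ((m ^ k).factorization p) := by
    rw [hβ, Nat.factorization_gcd hk (pow_ne_zero _ hm)]; rfl
  have h1 : k.factorization p < k := Nat.factorization_lt p hk
  have h2 : k ≤ (m ^ k).factorization p := by
    rw [Nat.factorization_pow]
    have : 1 ≤ m.factorization p := (ppn.factorization_pos_of_dvd hm hpm)
    calc k = k * 1 := (mul_one k).symm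
    _ ≤ k * m.factorization p := Nat.mul_le_mul_left k this
  have hmin : min (k.factorization p) ((m ^ k).factorization p) = k.factorization p :=
    min_eq_left (le_trans h1.le h2)
  have hz : (k / β).factorization p = 0 := by
    rw [hfα, hfβ, hmin]; omega
  have hpos := ppn.factorization_pos_of_dvd hαpos.ne' hpα
  omega

-- u is an m-th power if its order is coprime to m
lemma pow_rep {G : Type*} [Group G] (u : G) (m : ℕ)
    (h : Nat.Coprime (orderOf u) m) : ∃ w : G, w ^ m = u := by
  obtain ⟨s, t, hst⟩ : ∃ s t : ℤ, (m : ℤ) * s + (orderOf u : ℤ) * t = 1 := by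
    refine ⟨Nat.gcdB (orderOf u) m, Nat.gcdA (orderOf u) m, ?_⟩
    have := Nat.gcd_eq_gcd_ab (orderOf u) m
    rw [Nat.Coprime.gcd_eq_one h] at this
    push_cast at this ⊢
    linarith
  refine ⟨u ^ s, ?_⟩
  have : (u ^ s) ^ (m : ℤ) = u := by
    rw [← zpow_mul, mul_comm]
    calc u ^ ((m : ℤ) * s) = u ^ ((m : ℤ) * s) * (u ^ (orderOf u : ℤ)) ^ t := by
          rw [zpow_natCast, pow_orderOf_eq_one, one_zpow, mul_one]
    _ = u ^ ((m : ℤ) * s + (orderOf u : ℤ) * t) := by rw [← zpow_mul, ← zpow_add]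
    _ = u := by rw [hst, zpow_one]
  rw [← zpow_natCast (u ^ s) m]
  exact this

-- commutator power lemma
lemma comm_pow {G : Type*} [Group G] (a b c : G) (h : a * b = b * a * c)
    (hc : c * a = a * c) : ∀ k : ℕ, a ^ k * b = b * a ^ k * c ^ k := by
  intro k
  induction k with
  | zero => simp
  | succ k ih =>
    have hck : c * a ^ k = a ^ k * c := (Commute.pow_right hc k : Commute c (a ^ k))
    calc a ^ (k+1) * b = a * (a ^ k * b) := by rw [pow_succ']; group
    _ = a * (b * a ^ k * c ^ k) := by rw [ih]
    _ = (a * b) * a ^ k * c ^ k := by group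
    _ = (b * a * c) * a ^ k * c ^ k := by rw [h]
    _ = b * a * (c * a ^ k) * c ^ k := by group
    _ = b * a * (a ^ k * c) * c ^ k := by rw [hck]
    _ = b * a ^ (k+1) * c ^ (k+1) := by rw [pow_succ, pow_succ']; group

-- key lemma: an m-th power and an n-th power of coprime finite orders commute
lemma key {G : Type*} [Group G] (m n : ℕ)
    (hm : ∀ a b : G, a ^ m * b ^ m = b ^ m * a ^ m)
    (hn : ∀ a b : G, a ^ n * b ^ n = b ^ n * a ^ n)
    (a b : G) (α β : G) (ha : α ^ m = a) (hb : β ^ n = b)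
    (A B : ℕ) (hA : a ^ A = 1) (hB : b ^ B = 1) (hAB : Nat.Coprime A B) :
    a * b = b * a := by
  set c := a⁻¹ * b⁻¹ * a * b with hcdef
  have habc : a * b = b * a * c := by rw [hcdef]; group
  -- c commutes with a
  have hca : c * a = a * c := by
    have hconj : (b⁻¹ * α * b) ^ m = b⁻¹ * α ^ m * b := by
      simpa using conj_pow (i := m) (a := b⁻¹) (b := α)
    have hc1 : c = (α⁻¹) ^ m * (b⁻¹ * α * b) ^ m := by
      rw [hcdef, ← ha, hconj]; group
    rw [hc1, ← ha]
    calc (α⁻¹ ^ m * (b⁻¹ * α * b) ^ m) * α ^ m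
        = α⁻¹ ^ m * ((b⁻¹ * α * b) ^ m * α ^ m) := by group
    _ = α⁻¹ ^ m * (α ^ m * (b⁻¹ * α * b) ^ m) := by rw [hm]
    _ = (α⁻¹ ^ m * α ^ m) * (b⁻¹ * α * b) ^ m := by group
    _ = (α ^ m * α⁻¹ ^ m) * (b⁻¹ * α * b) ^ m := by rw [hm]
    _ = α ^ m * (α⁻¹ ^ m * (b⁻¹ * α * b) ^ m) := by group
  -- c commutes with b
  have hcb : c * b = b * c := by
    have hconj : (a⁻¹ * β⁻¹ * a) ^ n = a⁻¹ * β⁻¹ ^ n * a := by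
      simpa using conj_pow (i := n) (a := a⁻¹) (b := β⁻¹)
    have hc2 : c = (a⁻¹ * β⁻¹ * a) ^ n * β ^ n := by
      rw [hcdef, ← hb, hconj]; group
    have hS : (a⁻¹ * β⁻¹ * a) ^ n * β ^ n = β ^ n * (a⁻¹ * β⁻¹ * a) ^ n := hn _ β
    rw [hc2, ← hb]
    calc (a⁻¹ * β⁻¹ * a) ^ n * β ^ n * β ^ n
        = (β ^ n * (a⁻¹ * β⁻¹ * a) ^ n) * β ^ n := by rw [hS]
    _ = β ^ n * ((a⁻¹ * β⁻¹ * a) ^ n * β ^ n) := by rw [mul_assoc]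
  -- c ^ A = 1
  have hcA : c ^ A = 1 := by
    have h0 := comm_pow a b c habc hca A
    rw [hA] at h0
    have h' : b = b * c ^ A := by simpa using h0
    exact (left_eq_mul.mp h')
  -- c ^ B = 1 via d = c⁻¹
  have hcB : c ^ B = 1 := by
    have hbad : b * a = a * b * c⁻¹ := by rw [hcdef]; group
    have hdb : c⁻¹ * b = b * c⁻¹ := (Commute.inv_left (hcb : Commute c b) : Commute c⁻¹ b)
    have h0 := comm_pow b a c⁻¹ hbad hdb B
    rw [hB] at h0
    have h' : a = a * c⁻¹ ^ B := by simpa using h0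
    have h'' : c⁻¹ ^ B = 1 := left_eq_mul.mp h'
    rw [inv_pow, inv_eq_one] at h''
    exact h''
  have hd : orderOf c ∣ Nat.gcd A B :=
    Nat.dvd_gcd (orderOf_dvd_of_pow_eq_one hcA) (orderOf_dvd_of_pow_eq_one hcB)
  rw [hAB.gcd_eq_one] at hd
  have hc1 : c = 1 := orderOf_eq_one_iff.mp (Nat.dvd_one.mp hd)
  rw [habc, hc1, mul_one]

-- decomposition of a torsion element
lemma decomp {G : Type*} [Group G] (x : G) (hx : IsOfFinOrder x) (m : ℕ) (hm : m ≠ 0) :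
    ∃ u v : G, x = u * v ∧ u * v = v * u ∧
      Nat.Coprime (orderOf u) m ∧ orderOf v ∣ m ^ orderOf x ∧
      (∃ j : ℤ, u = x ^ j) ∧ (∃ j : ℤ, v = x ^ j) := by
  set k := orderOf x with hk
  have hk0 : k ≠ 0 := (orderOf_pos_iff.mpr hx).ne'
  set β := Nat.gcd k (m ^ k) with hβ
  set α := k / β with hα
  have hβdvd : β ∣ k := Nat.gcd_dvd_left _ _
  have hαβ : α * β = k := Nat.div_mul_cancel hβdvd
  have hcop : Nat.Coprime α (m ^ k) := nt_coprime k m hk0 hm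
  have hcopαβ : Nat.Coprime α β := Nat.Coprime.coprime_dvd_right (Nat.gcd_dvd_right _ _) hcop
  obtain ⟨s, t, hst⟩ : ∃ s t : ℤ, (α : ℤ) * s + (β : ℤ) * t = 1 := by
    refine ⟨Nat.gcdA α β, Nat.gcdB α β, ?_⟩
    have := Nat.gcd_eq_gcd_ab α β
    rw [hcopαβ] at this
    push_cast at this ⊢
    linarith
  refine ⟨x ^ ((β : ℤ) * t), x ^ ((α : ℤ) * s), ?_, ?_, ?_, ?_, ⟨_, rfl⟩, ⟨_, rfl⟩⟩
  · rw [← zpow_add]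
    rw [add_comm] at hst
    rw [hst, zpow_one]
  · rw [← zpow_add, ← zpow_add, add_comm]
  · -- order of u divides α, and α coprime to m
    have hu : (x ^ ((β : ℤ) * t)) ^ (α : ℤ) = 1 := by
      rw [← zpow_mul]
      have : (β : ℤ) * t * α = (k : ℤ) * t := by push_cast [← hαβ]; ring
      rw [this, zpow_mul, zpow_natCast, pow_orderOf_eq_one, one_zpow]
    have hdvd : orderOf (x ^ ((β : ℤ) * t)) ∣ α := by
      have := hu
      rw [zpow_natCast] at this
      exact orderOf_dvd_of_pow_eq_one this
    have : Nat.Coprime α m := by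
      have := hcop
      rcases Nat.eq_zero_or_pos k with h | h
      · exact absurd h hk0
      · exact Nat.Coprime.coprime_dvd_right (dvd_pow_self m hk0) hcop
    exact Nat.Coprime.coprime_dvd_left hdvd this
  · -- order of v divides β, β ∣ m ^ k
    have hv : (x ^ ((α : ℤ) * s)) ^ (β : ℤ) = 1 := by
      rw [← zpow_mul]
      have : (α : ℤ) * s * β = (k : ℤ) * s := by push_cast [← hαβ]; ring
      rw [this, zpow_mul, zpow_natCast, pow_orderOf_eq_one, one_zpow]
    have hdvd : orderOf (x ^ ((α : ℤ) * s)) ∣ β := by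
      rw [zpow_natCast] at hv
      exact orderOf_dvd_of_pow_eq_one hv
    exact dvd_trans hdvd (Nat.gcd_dvd_right _ _)

theorem torsion_elements_commute (G : Type*) [Group G]
    (m n : ℕ) (hmn : Nat.Coprime m n)
    (hm : ∀ a b : G, a ^ m * b ^ m = b ^ m * a ^ m)
    (hn : ∀ a b : G, a ^ n * b ^ n = b ^ n * a ^ n)
    (x y : G) (hx : IsOfFinOrder x) (hy : IsOfFinOrder y) :
    x * y = y * x := by
  -- trivial cases
  rcases Nat.eq_zero_or_pos m with hm0 | hmpos
  · have hn1 : n = 1 := by simpa [hm0, Nat.coprime_zero_left] using hmn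
    have := hn x y
    simpa [hn1] using this
  rcases Nat.eq_zero_or_pos n with hn0 | hnpos
  · have hm1 : m = 1 := by simpa [hn0, Nat.coprime_zero_right] using hmn
    have := hm x y
    simpa [hm1] using this
  obtain ⟨u, v, hxuv, huv, hcu, hdv, ⟨jx, hju⟩, ⟨jx', hjv⟩⟩ := decomp x hx m hmpos.ne'
  obtain ⟨u', v', hyuv, huv', hcu', hdv', ⟨jy, hju'⟩, ⟨jy', hjv'⟩⟩ := decomp y hy m hmpos.ne'
  -- representations
  obtain ⟨wu, hwu⟩ := pow_rep u m hcu
  obtain ⟨wu', hwu'⟩ := pow_rep u' m hcu'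
  have hvn : Nat.Coprime (orderOf v) n := by
    have : Nat.Coprime (m ^ orderOf x) n := Nat.Coprime.pow_left _ hmn
    exact Nat.Coprime.coprime_dvd_left hdv this
  have hvn' : Nat.Coprime (orderOf v') n := by
    have : Nat.Coprime (m ^ orderOf y) n := Nat.Coprime.pow_left _ hmn
    exact Nat.Coprime.coprime_dvd_left hdv' this
  obtain ⟨wv, hwv⟩ := pow_rep v n hvn
  obtain ⟨wv', hwv'⟩ := pow_rep v' n hvn'
  -- cross coprimality
  have hcross1 : Nat.Coprime (orderOf u) (orderOf v') :=
    Nat.Coprime.coprime_dvd_right hdv' (Nat.Coprime.pow_right _ hcu)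
  have hcross2 : Nat.Coprime (orderOf u') (orderOf v) :=
    Nat.Coprime.coprime_dvd_right hdv (Nat.Coprime.pow_right _ hcu')
  -- commutation facts
  have c_uu' : u * u' = u' * u := by rw [← hwu, ← hwu', hm]
  have c_vv' : v * v' = v' * v := by rw [← hwv, ← hwv', hn]
  have c_uv' : u * v' = v' * u :=
    key m n hm hn u v' wu wv' hwu hwv' (orderOf u) (orderOf v')
      (pow_orderOf_eq_one u) (pow_orderOf_eq_one v') hcross1
  have c_u'v : u' * v = v * u' :=
    key m n hm hn u' v wu' wv hwu' hwv (orderOf u') (orderOf v)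
      (pow_orderOf_eq_one u') (pow_orderOf_eq_one v) hcross2
  -- assemble
  rw [hxuv, hyuv]
  calc (u * v) * (u' * v') = u * (v * u') * v' := by group
  _ = u * (u' * v) * v' := by rw [← c_u'v]
  _ = (u * u') * (v * v') := by group
  _ = (u' * u) * (v' * v) := by rw [c_uu', c_vv']
  _ = u' * (u * v') * v := by group
  _ = u' * (v' * u) * v := by rw [c_uv']
  _ = (u' * v') * (u * v) := by group
end

section
/- Let m, n be coprime natural numbers and G any group satisfying aᵐbᵐ = bᵐaᵐ and aⁿbⁿ = bⁿaⁿ for all a, b ∈ G. If p and q are distinct primes, a ∈ G has order a power of p, and b ∈ G has order a power of q, then ab = ba. -/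
private lemma key_commute {G : Type*} [Group G] {m n : ℕ}
    (hm : ∀ a b : G, a ^ m * b ^ m = b ^ m * a ^ m)
    (hn : ∀ a b : G, a ^ n * b ^ n = b ^ n * a ^ n)
    {a b c d : G} (hc : c ^ n = a) (hd : d ^ m = b)
    (hcop : Nat.Coprime (orderOf a) (orderOf b)) : a * b = b * a := by
  -- b * a * b⁻¹ commutes with a, both being n-th powers
  have h1 : Commute (b * a * b⁻¹) a := by
    have := hn (b * c * b⁻¹) c
    rw [conj_pow, hc] at this
    exact this
  -- a * b * a⁻¹ commutes with b, both being m-th powers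
  have h2 : Commute (a * b * a⁻¹) b := by
    have := hm (a * d * a⁻¹) d
    rw [conj_pow, hd] at this
    exact this
  have hord1 : orderOf (b * a * b⁻¹) = orderOf a :=
    (SemiconjBy.orderOf_eq b (by simp [SemiconjBy, mul_assoc] : SemiconjBy b a (b * a * b⁻¹))).symm
  have hord2 : orderOf (a * b * a⁻¹) = orderOf b :=
    (SemiconjBy.orderOf_eq a (by simp [SemiconjBy, mul_assoc] : SemiconjBy a b (a * b * a⁻¹))).symm
  have hxa : orderOf (b * a * b⁻¹ * a⁻¹) ∣ orderOf a := by
    have := (h1.inv_right).orderOf_mul_dvd_lcm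
    rwa [hord1, orderOf_inv, Nat.lcm_self] at this
  have hxb : orderOf (b * a * b⁻¹ * a⁻¹) ∣ orderOf b := by
    have := (h2.inv_right).orderOf_mul_dvd_lcm
    rw [hord2, orderOf_inv, Nat.lcm_self] at this
    have hxinv : (a * b * a⁻¹) * b⁻¹ = (b * a * b⁻¹ * a⁻¹)⁻¹ := by group
    rwa [hxinv, orderOf_inv] at this
  have hdvd1 : orderOf (b * a * b⁻¹ * a⁻¹) ∣ 1 := hcop ▸ Nat.dvd_gcd hxa hxb
  have hx1 : b * a * b⁻¹ * a⁻¹ = 1 :=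
    orderOf_eq_one_iff.mp (Nat.dvd_one.mp hdvd1)
  have hx1' : (b * a) * (a * b)⁻¹ = 1 := by
    rw [mul_inv_rev, ← mul_assoc]; exact hx1
  exact (mul_inv_eq_one.mp hx1').symm

private lemma exists_root {G : Type*} [Group G] (g : G) (r k e : ℕ) (hr : r.Prime)
    (hg : orderOf g = r ^ k) (he : ¬ r ∣ e) : ∃ c : G, c ^ e = g := by
  have hcop : e.Coprime (orderOf g) := by
    rw [hg]
    exact (((Nat.Prime.coprime_iff_not_dvd hr).mpr he).symm).pow_right k
  obtain ⟨t, ht⟩ := exists_pow_eq_self_of_coprime hcop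
  exact ⟨g ^ t, by rwa [← pow_mul, mul_comm, pow_mul]⟩

theorem prime_power_order_elements_commute (G : Type*) [Group G]
    (m n : ℕ) (hmn : Nat.Coprime m n)
    (hm : ∀ a b : G, a ^ m * b ^ m = b ^ m * a ^ m)
    (hn : ∀ a b : G, a ^ n * b ^ n = b ^ n * a ^ n)
    (p q : ℕ) (hp : p.Prime) (hq : q.Prime) (hpq : p ≠ q)
    (a b : G) (α β : ℕ) (ha : orderOf a = p ^ α) (hb : orderOf b = q ^ β) :
    a * b = b * a := by
  have hcop : Nat.Coprime (orderOf a) (orderOf b) := by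
    rw [ha, hb]
    exact Nat.Coprime.pow α β ((Nat.coprime_primes hp hq).mpr hpq)
  have hpa : ¬ (p ∣ m) ∨ ¬ (p ∣ n) := by
    by_contra h
    push_neg at h
    exact hp.one_lt.ne' (Nat.eq_one_of_dvd_one (hmn ▸ Nat.dvd_gcd h.1 h.2))
  have hqa : ¬ (q ∣ m) ∨ ¬ (q ∣ n) := by
    by_contra h
    push_neg at h
    exact hq.one_lt.ne' (Nat.eq_one_of_dvd_one (hmn ▸ Nat.dvd_gcd h.1 h.2))
  rcases hpa with hpm | hpn <;> rcases hqa with hqm | hqn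
  · obtain ⟨c, hc⟩ := exists_root a p α m hp ha hpm
    obtain ⟨d, hd⟩ := exists_root b q β m hq hb hqm
    exact key_commute hm hm hc hd hcop
  · obtain ⟨c, hc⟩ := exists_root a p α m hp ha hpm
    obtain ⟨d, hd⟩ := exists_root b q β n hq hb hqn
    exact key_commute hn hm hc hd hcop
  · obtain ⟨c, hc⟩ := exists_root a p α n hp ha hpn
    obtain ⟨d, hd⟩ := exists_root b q β m hq hb hqm
    exact key_commute hm hn hc hd hcop
  · obtain ⟨c, hc⟩ := exists_root a p α n hp ha hpn
    obtain ⟨d, hd⟩ := exists_root b q β n hq hb hqn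
    exact key_commute hn hn hc hd hcop
end

section
/- Let m, n be coprime natural numbers and G a group satisfying aᵐbᵐ = bᵐaᵐ and aⁿbⁿ = bⁿaⁿ for all a, b ∈ G. If every element of G has order a power of a fixed prime p (G is a p-group), then G is abelian. -/
theorem pgroup_abelian_of_coprime_powers_commute (G : Type*) [Group G]
    (m n : ℕ) (hmn : Nat.Coprime m n)
    (hm : ∀ a b : G, a ^ m * b ^ m = b ^ m * a ^ m)
    (hn : ∀ a b : G, a ^ n * b ^ n = b ^ n * a ^ n)
    (p : ℕ) (hp : p.Prime) (hG : IsPGroup p G) :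
    ∀ a b : G, a * b = b * a := by
  have key : ∀ (r : ℕ), ¬ p ∣ r → (∀ a b : G, a ^ r * b ^ r = b ^ r * a ^ r) →
      ∀ a b : G, a * b = b * a := by
    intro r hpr hr a b
    have surj : ∀ g : G, ∃ c : G, c ^ r = g := by
      intro g
      obtain ⟨k, hk⟩ := hG g
      have hord : orderOf g ∣ p ^ k := orderOf_dvd_of_pow_eq_one hk
      have hpos : 0 < orderOf g := Nat.pos_of_dvd_of_pos hord (pow_pos hp.pos k)
      have hcop : Nat.Coprime r (orderOf g) :=
        Nat.Coprime.coprime_dvd_right hord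
          (Nat.Coprime.pow_right _ ((hp.coprime_iff_not_dvd.mpr hpr).symm))
      have ht : r ^ Nat.totient (orderOf g) ≡ 1 [MOD orderOf g] :=
        Nat.ModEq.pow_totient hcop
      have htpos : 0 < Nat.totient (orderOf g) := Nat.totient_pos.mpr hpos
      refine ⟨g ^ (r ^ (Nat.totient (orderOf g) - 1)), ?_⟩
      rw [← pow_mul, ← pow_succ, Nat.sub_add_cancel htpos]
      calc g ^ (r ^ Nat.totient (orderOf g)) = g ^ 1 :=
            (pow_eq_pow_iff_modEq).mpr ht
        _ = g := pow_one g
    obtain ⟨c, hc⟩ := surj a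
    obtain ⟨d, hd⟩ := surj b
    rw [← hc, ← hd]
    exact hr c d
  by_cases h : p ∣ n
  · have : ¬ p ∣ m := fun hpm => hp.one_lt.ne' (Nat.eq_one_of_dvd_coprimes hmn hpm h)
    exact key m this hm
  · exact key n h hn
end

section
/- Let m, n be coprime natural numbers. Every locally finite group G satisfying aᵐbᵐ = bᵐaᵐ and aⁿbⁿ = bⁿaⁿ for all a, b ∈ G is abelian. -/
private lemma aux_pow_left {G : Type*} [Group G] {x y c : G} (hc : ∀ g : G, c * g = g * c)
    (h : x * y = y * x * c) (k : ℕ) : x ^ k * y = y * x ^ k * c ^ k := by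
  induction k with
  | zero => simp
  | succ k ih =>
    calc x ^ (k + 1) * y = x * (x ^ k * y) := by rw [pow_succ']; group
    _ = x * (y * x ^ k * c ^ k) := by rw [ih]
    _ = (x * y) * (x ^ k * c ^ k) := by group
    _ = (y * x * c) * (x ^ k * c ^ k) := by rw [h]
    _ = y * x * (c * x ^ k) * c ^ k := by group
    _ = y * x * (x ^ k * c) * c ^ k := by rw [hc]
    _ = y * (x * x ^ k) * (c * c ^ k) := by group
    _ = y * x ^ (k + 1) * c ^ (k + 1) := by rw [← pow_succ', ← pow_succ']


private lemma central_pow {G : Type*} [Group G] {c : G} (hc : ∀ g : G, c * g = g * c)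
    (k : ℕ) (g : G) : c ^ k * g = g * c ^ k := by
  induction k with
  | zero => simp
  | succ k ih => rw [pow_succ, mul_assoc, hc, ← mul_assoc, ih, mul_assoc]

private lemma aux_pow_right {G : Type*} [Group G] {x y c : G} (hc : ∀ g : G, c * g = g * c)
    (h : x * y = y * x * c) (k : ℕ) : x * y ^ k = y ^ k * x * c ^ k := by
  induction k with
  | zero => simp
  | succ k ih =>
    calc x * y ^ (k + 1) = (x * y) * y ^ k := by rw [pow_succ']; group
    _ = (y * x * c) * y ^ k := by rw [h]
    _ = y * x * (c * y ^ k) := by group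
    _ = y * x * (y ^ k * c) := by
        rw [hc (y ^ k)]
    _ = y * (x * y ^ k) * c := by group
    _ = y * (y ^ k * x * c ^ k) * c := by rw [ih]
    _ = y ^ (k + 1) * x * c ^ (k + 1) := by rw [pow_succ', pow_succ]; group

private lemma comm_of_closure {G : Type*} [Group G] {S : Set G}
    (hS : ∀ a ∈ S, ∀ b ∈ S, a * b = b * a) :
    ∀ x ∈ Subgroup.closure S, ∀ y ∈ Subgroup.closure S, x * y = y * x := by
  have h1 : Subgroup.closure S ≤ Subgroup.centralizer S := by
    rw [Subgroup.closure_le]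
    intro a ha
    exact Subgroup.mem_centralizer_iff.mpr fun b hb => hS b hb a ha
  have h2 : Subgroup.closure S ≤ Subgroup.centralizer (Subgroup.closure S : Set G) := by
    rw [Subgroup.closure_le]
    intro a ha
    rw [SetLike.mem_coe, Subgroup.mem_centralizer_iff]
    intro b hb
    exact (Subgroup.mem_centralizer_iff.mp (h1 hb) a ha).symm
  intro x hx y hy
  exact Subgroup.mem_centralizer_iff.mp (h2 hy) x hx

private lemma closure_pow_normal {G : Type*} [Group G] (k : ℕ) :
    (Subgroup.closure (Set.range fun g : G => g ^ k)).Normal := by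
  constructor
  intro a ha g
  induction ha using Subgroup.closure_induction with
  | mem x hx =>
    obtain ⟨w, rfl⟩ := hx
    have : g * w ^ k * g⁻¹ = (g * w * g⁻¹) ^ k := (conj_pow).symm
    rw [this]
    exact Subgroup.subset_closure ⟨g * w * g⁻¹, rfl⟩
  | one => simpa using Subgroup.one_mem _
  | mul x y hx hy ihx ihy =>
    have : g * (x * y) * g⁻¹ = (g * x * g⁻¹) * (g * y * g⁻¹) := by group
    rw [this]; exact Subgroup.mul_mem _ ihx ihy
  | inv x hx ihx =>
    have : g * x⁻¹ * g⁻¹ = (g * x * g⁻¹)⁻¹ := by group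
    rw [this]; exact Subgroup.inv_mem _ ihx

/-- Commutators lie in the closure of the `k`-th powers, provided `u*k + v*l = 1`
and `l`-th powers commute. -/
private lemma commutator_mem_closure_pow {G : Type*} [Group G] (k l : ℕ) (u v : ℤ)
    (huv : u * k + v * l = 1) (hl : ∀ a b : G, a ^ l * b ^ l = b ^ l * a ^ l) (x y : G) :
    x⁻¹ * y⁻¹ * x * y ∈ Subgroup.closure (Set.range fun g : G => g ^ k) := by
  set A := Subgroup.closure (Set.range fun g : G => g ^ k) with hA
  letI : A.Normal := closure_pow_normal k
  have hmemA : ∀ g : G, g ^ (u * (k : ℤ)) ∈ A := by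
    intro g
    have : g ^ (u * (k : ℤ)) = (g ^ u) ^ k := by
      rw [zpow_mul, zpow_natCast]
    rw [this]
    exact Subgroup.subset_closure ⟨g ^ u, rfl⟩
  have hmk : ∀ g : G, (QuotientGroup.mk g : G ⧸ A) = QuotientGroup.mk (g ^ (v * (l : ℤ))) := by
    intro g
    have hg : g = g ^ (u * (k : ℤ)) * g ^ (v * (l : ℤ)) := by
      rw [← zpow_add, huv, zpow_one]
    calc (QuotientGroup.mk g : G ⧸ A)
        = QuotientGroup.mk (g ^ (u * (k : ℤ)) * g ^ (v * (l : ℤ))) := by rw [← hg]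
      _ = QuotientGroup.mk (g ^ (u * (k : ℤ))) * QuotientGroup.mk (g ^ (v * (l : ℤ))) := rfl
      _ = QuotientGroup.mk (g ^ (v * (l : ℤ))) := by
          rw [(QuotientGroup.eq_one_iff _).mpr (hmemA g), one_mul]
  have key : (QuotientGroup.mk (y * x) : G ⧸ A) = QuotientGroup.mk (x * y) := by
    have hxl : x ^ (v * (l : ℤ)) = (x ^ v) ^ l := by rw [zpow_mul, zpow_natCast]
    have hyl : y ^ (v * (l : ℤ)) = (y ^ v) ^ l := by rw [zpow_mul, zpow_natCast]
    calc (QuotientGroup.mk (y * x) : G ⧸ A)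
        = QuotientGroup.mk y * QuotientGroup.mk x := rfl
      _ = QuotientGroup.mk ((y ^ v) ^ l) * QuotientGroup.mk ((x ^ v) ^ l) := by
          rw [← hxl, ← hyl, ← hmk x, ← hmk y]
      _ = QuotientGroup.mk ((y ^ v) ^ l * (x ^ v) ^ l) := rfl
      _ = QuotientGroup.mk ((x ^ v) ^ l * (y ^ v) ^ l) := by rw [hl (y ^ v) (x ^ v)]
      _ = QuotientGroup.mk ((x ^ v) ^ l) * QuotientGroup.mk ((y ^ v) ^ l) := rfl
      _ = QuotientGroup.mk x * QuotientGroup.mk y := by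
          rw [← hxl, ← hyl, ← hmk x, ← hmk y]
      _ = QuotientGroup.mk (x * y) := rfl
  have := QuotientGroup.eq.mp key
  have heq : (y * x)⁻¹ * (x * y) = x⁻¹ * y⁻¹ * x * y := by group
  rwa [heq] at this

theorem locally_finite_abelian_of_coprime_powers_commute (G : Type*) [Group G]
    (m n : ℕ) (hmn : Nat.Coprime m n)
    (hloc : ∀ S : Subgroup G, S.FG → Finite S)
    (hm : ∀ a b : G, a ^ m * b ^ m = b ^ m * a ^ m)
    (hn : ∀ a b : G, a ^ n * b ^ n = b ^ n * a ^ n) :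
    ∀ a b : G, a * b = b * a := by
  obtain ⟨u, v, huv⟩ : IsCoprime (m : ℤ) (n : ℤ) := Int.isCoprime_iff_gcd_eq_one.mpr hmn
  intro x y
  set A := Subgroup.closure (Set.range fun g : G => g ^ m) with hA
  set B := Subgroup.closure (Set.range fun g : G => g ^ n) with hB
  set c := x⁻¹ * y⁻¹ * x * y with hc
  have hcA : c ∈ A := commutator_mem_closure_pow m n u v huv hn x y
  have hcB : c ∈ B := commutator_mem_closure_pow n m v u (by linarith) hm x y
  -- c is central
  have hAcomm := comm_of_closure (S := Set.range fun g : G => g ^ m)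
    (by rintro a ⟨a', rfl⟩ b ⟨b', rfl⟩; exact hm a' b')
  have hBcomm := comm_of_closure (S := Set.range fun g : G => g ^ n)
    (by rintro a ⟨a', rfl⟩ b ⟨b', rfl⟩; exact hn a' b')
  have hcentral : ∀ g : G, c * g = g * c := by
    intro g
    have hga : g ^ (u * (m : ℤ)) ∈ A := by
      have : g ^ (u * (m : ℤ)) = (g ^ u) ^ m := by rw [zpow_mul, zpow_natCast]
      rw [this]; exact Subgroup.subset_closure ⟨g ^ u, rfl⟩
    have hgb : g ^ (v * (n : ℤ)) ∈ B := by
      have : g ^ (v * (n : ℤ)) = (g ^ v) ^ n := by rw [zpow_mul, zpow_natCast]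
      rw [this]; exact Subgroup.subset_closure ⟨g ^ v, rfl⟩
    have hg : g = g ^ (u * (m : ℤ)) * g ^ (v * (n : ℤ)) := by
      rw [← zpow_add, huv, zpow_one]
    have h1 : c * g ^ (u * (m : ℤ)) = g ^ (u * (m : ℤ)) * c := hAcomm c hcA _ hga
    have h2 : c * g ^ (v * (n : ℤ)) = g ^ (v * (n : ℤ)) * c := hBcomm c hcB _ hgb
    have key1 : c * (g ^ (u * (m : ℤ)) * g ^ (v * (n : ℤ)))
        = (g ^ (u * (m : ℤ)) * g ^ (v * (n : ℤ))) * c := by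
      calc c * (g ^ (u * (m : ℤ)) * g ^ (v * (n : ℤ)))
          = (c * g ^ (u * (m : ℤ))) * g ^ (v * (n : ℤ)) := (mul_assoc _ _ _).symm
        _ = (g ^ (u * (m : ℤ)) * c) * g ^ (v * (n : ℤ)) := by rw [h1]
        _ = g ^ (u * (m : ℤ)) * (c * g ^ (v * (n : ℤ))) := mul_assoc _ _ _
        _ = g ^ (u * (m : ℤ)) * (g ^ (v * (n : ℤ)) * c) := by rw [h2]
        _ = (g ^ (u * (m : ℤ)) * g ^ (v * (n : ℤ))) * c := (mul_assoc _ _ _).symm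
    rw [← hg] at key1
    exact key1
  have hxy : x * y = y * x * c := by rw [hc]; group
  -- c ^ (k*k) = 1 when k-th powers commute
  have key : ∀ k : ℕ, (∀ a b : G, a ^ k * b ^ k = b ^ k * a ^ k) → c ^ (k * k) = 1 := by
    intro k hk
    have h1 : x ^ k * y = y * x ^ k * c ^ k := aux_pow_left hcentral hxy k
    have hck : ∀ g : G, c ^ k * g = g * c ^ k := central_pow hcentral k
    have h2 : x ^ k * y ^ k = y ^ k * x ^ k * (c ^ k) ^ k := aux_pow_right hck h1 k
    rw [hk x y] at h2
    have : (c ^ k) ^ k = 1 := by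
      have := mul_left_cancel (a := y ^ k * x ^ k)
        (by rw [mul_one]; exact h2.symm : (y ^ k * x ^ k) * ((c ^ k) ^ k) = (y ^ k * x ^ k) * 1)
      exact this
    rwa [← pow_mul] at this
  have hcm : c ^ (m * m) = 1 := key m hm
  have hcn : c ^ (n * n) = 1 := key n hn
  have hco : Nat.Coprime (m * m) (n * n) := Nat.Coprime.mul (hmn.mul_right hmn) (hmn.mul_right hmn)
  have hdvd : orderOf c ∣ Nat.gcd (m * m) (n * n) :=
    Nat.dvd_gcd (orderOf_dvd_of_pow_eq_one hcm) (orderOf_dvd_of_pow_eq_one hcn)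
  rw [hco] at hdvd
  have : c = 1 := orderOf_eq_one_iff.mp (Nat.dvd_one.mp hdvd)
  rw [hxy, this, mul_one]
end

section
/- Let p be a prime and m, n coprime natural numbers. Every group G that is residually a finite p-group and satisfies aᵐbᵐ = bᵐaᵐ and aⁿbⁿ = bⁿaⁿ for all a, b ∈ G is abelian. -/
lemma aux_pow_surj {Q : Type*} [Group Q] [Finite Q] {p : ℕ} (hp : p.Prime)
    (hQ : IsPGroup p Q) {k : ℕ} (hpk : ¬ p ∣ k) :
    Function.Surjective (fun q : Q => q ^ k) := by
  haveI : Fact p.Prime := ⟨hp⟩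
  obtain ⟨e, he⟩ := IsPGroup.iff_card.mp hQ
  have hco : (Nat.card Q).Coprime k := by
    rw [he]
    exact Nat.Coprime.pow_left _ (hp.coprime_iff_not_dvd.mpr hpk)
  exact (powCoprime hco).surjective

theorem residually_p_abelian_of_coprime_powers_commute (G : Type*) [Group G]
    (p : ℕ) (hp : p.Prime)
    (m n : ℕ) (hmn : Nat.Coprime m n)
    (hres : ∀ g : G, g ≠ 1 →
      ∃ N : Subgroup G, ∃ _ : N.Normal, g ∉ N ∧ Finite (G ⧸ N) ∧ IsPGroup p (G ⧸ N))
    (hm : ∀ a b : G, a ^ m * b ^ m = b ^ m * a ^ m)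
    (hn : ∀ a b : G, a ^ n * b ^ n = b ^ n * a ^ n) :
    ∀ a b : G, a * b = b * a := by
  intro a b
  by_contra hab
  have hg : a * b * (b * a)⁻¹ ≠ 1 := by
    intro h
    exact hab (mul_inv_eq_one.mp h)
  obtain ⟨N, hN, hgN, hfin, hpQ⟩ := hres _ hg
  haveI := hN
  haveI := hfin
  set π : G →* G ⧸ N := QuotientGroup.mk' N with hπ
  have hπs : Function.Surjective π := QuotientGroup.mk'_surjective N
  have hmQ : ∀ x y : G ⧸ N, x ^ m * y ^ m = y ^ m * x ^ m := by
    intro x y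
    obtain ⟨a', rfl⟩ := hπs x
    obtain ⟨b', rfl⟩ := hπs y
    simpa [← map_pow, ← map_mul] using congrArg π (hm a' b')
  have hnQ : ∀ x y : G ⧸ N, x ^ n * y ^ n = y ^ n * x ^ n := by
    intro x y
    obtain ⟨a', rfl⟩ := hπs x
    obtain ⟨b', rfl⟩ := hπs y
    simpa [← map_pow, ← map_mul] using congrArg π (hn a' b')
  have hcomm : ∀ x y : G ⧸ N, x * y = y * x := by
    have hnd : ¬ p ∣ m ∨ ¬ p ∣ n := by
      by_contra h
      push_neg at h
      have : p ∣ Nat.gcd m n := Nat.dvd_gcd h.1 h.2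
      rw [hmn] at this
      exact hp.one_lt.ne' (Nat.eq_one_of_dvd_one this ▸ rfl)
    rcases hnd with h | h
    · intro x y
      obtain ⟨x', rfl⟩ := aux_pow_surj hp hpQ h x
      obtain ⟨y', rfl⟩ := aux_pow_surj hp hpQ h y
      exact hmQ x' y'
    · intro x y
      obtain ⟨x', rfl⟩ := aux_pow_surj hp hpQ h x
      obtain ⟨y', rfl⟩ := aux_pow_surj hp hpQ h y
      exact hnQ x' y'
  apply hgN
  have : π (a * b * (b * a)⁻¹) = 1 := by
    rw [map_mul, map_inv, map_mul, map_mul, hcomm (π a) (π b), mul_inv_cancel]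
  exact (QuotientGroup.eq_one_iff _).mp this
end

section
/- Let m, n be coprime natural numbers. If G is a nilpotent group satisfying aᵐbᵐ = bᵐaᵐ and aⁿbⁿ = bⁿaⁿ for all a, b ∈ G, then the torsion subgroup T(G) of G is an abelian normal subgroup. -/
private lemma orderOf_zpow_dvd' {G : Type*} [Group G] (z : G) (s : ℤ) :
    orderOf (z ^ s) ∣ orderOf z := by
  rcases s with k | k
  · rw [Int.ofNat_eq_coe, zpow_natCast]; exact orderOf_pow_dvd k
  · rw [zpow_negSucc, orderOf_inv]; exact orderOf_pow_dvd _

/-- number-theoretic decomposition: d = A * B with A dividing a power of m and B coprime to m -/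
private lemma nat_decomp (m : ℕ) (d : ℕ) (hd : 0 < d) :
    ∃ A B k, A * B = d ∧ A ∣ m ^ k ∧ Nat.Coprime B m := by
  induction d using Nat.strong_induction_on with
  | _ d ih =>
    rcases eq_or_ne (Nat.gcd d m) 1 with h1 | h1
    · exact ⟨1, d, 0, one_mul d, dvd_refl 1, h1⟩
    · have hgpos : 0 < Nat.gcd d m := Nat.gcd_pos_of_pos_left m hd
      have hg2 : 2 ≤ Nat.gcd d m := by omega
      have hgd : Nat.gcd d m ∣ d := Nat.gcd_dvd_left d m
      obtain ⟨d', hd'⟩ := hgd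
      have hd'pos : 0 < d' := by
        rcases Nat.eq_zero_or_pos d' with h | h
        · subst h; omega
        · exact h
      have hlt : d' < d := by
        calc d' < 2 * d' := by omega
        _ ≤ Nat.gcd d m * d' := Nat.mul_le_mul_right d' hg2
        _ = d := hd'.symm
      obtain ⟨A, B, k, hAB, hAk, hB⟩ := ih d' hlt hd'pos
      refine ⟨Nat.gcd d m * A, B, k + 1, ?_, ?_, hB⟩
      · rw [mul_assoc, hAB, ← hd']
      · rw [pow_succ']
        exact mul_dvd_mul (Nat.gcd_dvd_right d m) hAk

/-- an element whose order is coprime to m is an m-th power -/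
private lemma root_of_coprime {G : Type*} [Group G] (m : ℕ) (u : G)
    (h : Nat.Coprime m (orderOf u)) : ∃ a : G, a ^ m = u := by
  rcases eq_or_ne (orderOf u) 1 with h1 | h1
  · exact ⟨1, by rw [one_pow, (orderOf_eq_one_iff.mp h1)]⟩
  · rcases Nat.eq_zero_or_pos (orderOf u) with h0 | h0
    · rw [h0, Nat.coprime_zero_right] at h
      exact ⟨u, by rw [h, pow_one]⟩
    · have h2 : 1 < orderOf u := by omega
      obtain ⟨c, -, hc⟩ := Nat.exists_mul_mod_eq_one_of_coprime h h2
      refine ⟨u ^ c, ?_⟩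
      rw [← pow_mul, mul_comm c m, ← pow_mod_orderOf, hc, pow_one]

private lemma semiconj_pow_aux {G : Type*} [Group G] (x y c : G)
    (hc : ∀ g : G, c * g = g * c) (h : x * y = c * (y * x)) :
    ∀ k : ℕ, x ^ k * y = c ^ k * (y * x ^ k) := by
  intro k
  induction k with
  | zero => simp
  | succ k ih =>
    have h3 : x ^ (k + 1) * y = x ^ k * (x * y) := by rw [pow_succ]; group
    rw [h3, h, ← mul_assoc, ← hc (x ^ k)]
    have h4 : c * x ^ k * (y * x) = c * ((x ^ k * y) * x) := by group
    rw [h4, ih]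
    group

/-- In a nilpotent group, elements of coprime finite orders commute. -/
private lemma coprime_orders_commute : ∀ (G : Type*) [Group G] [Group.IsNilpotent G],
    ∀ x y : G, IsOfFinOrder x → IsOfFinOrder y →
      Nat.Coprime (orderOf x) (orderOf y) → x * y = y * x := by
  intro G _ _
  refine nilpotent_center_quotient_ind
    (P := fun G _ _ => ∀ x y : G, IsOfFinOrder x → IsOfFinOrder y →
      Nat.Coprime (orderOf x) (orderOf y) → x * y = y * x) G ?_ ?_
  · intro G _ _ x y _ _ _
    have : Subsingleton G := inferInstance
    exact Subsingleton.elim _ _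
  · intro G _ _ ih
    intro x y hx hy hcop
    set π := QuotientGroup.mk' (Subgroup.center G) with hπ
    have hq : π x * π y = π y * π x := by
      refine ih (π x) (π y) (π.isOfFinOrder hx) (π.isOfFinOrder hy) ?_
      exact Nat.Coprime.coprime_dvd_left (orderOf_map_dvd π x)
        (Nat.Coprime.coprime_dvd_right (orderOf_map_dvd π y) hcop)
    set c := x * y * x⁻¹ * y⁻¹ with hcdef
    have hcmem : c ∈ Subgroup.center G := by
      rw [← QuotientGroup.ker_mk' (Subgroup.center G), MonoidHom.mem_ker]
      have : π c = π x * π y * (π x)⁻¹ * (π y)⁻¹ := by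
        simp [hcdef, map_mul]
      rw [this, hq]; group
    have hcc : ∀ g : G, c * g = g * c := fun g =>
      ((Subgroup.mem_center_iff.mp hcmem) g).symm
    have hxy : x * y = c * (y * x) := by rw [hcdef]; group
    have hyx : y * x = c⁻¹ * (x * y) := by rw [hxy]; group
    have hcinv : ∀ g : G, c⁻¹ * g = g * c⁻¹ := by
      intro g
      have := hcc g
      calc c⁻¹ * g = c⁻¹ * (g * c) * c⁻¹ := by group
        _ = c⁻¹ * (c * g) * c⁻¹ := by rw [this]
        _ = g * c⁻¹ := by group
    have h1 : c ^ orderOf x = 1 := by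
      have := semiconj_pow_aux x y c hcc hxy (orderOf x)
      rw [pow_orderOf_eq_one] at this
      simp only [one_mul, mul_one] at this
      have : c ^ orderOf x * y = y := by rw [← this]
      exact mul_right_cancel (by rwa [one_mul])
    have h2 : c⁻¹ ^ orderOf y = 1 := by
      have := semiconj_pow_aux y x c⁻¹ hcinv hyx (orderOf y)
      rw [pow_orderOf_eq_one] at this
      simp only [one_mul, mul_one] at this
      have : c⁻¹ ^ orderOf y * x = x := by rw [← this]
      exact mul_right_cancel (by rwa [one_mul])
    have hd1 : orderOf c ∣ orderOf x := orderOf_dvd_of_pow_eq_one h1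
    have hd2 : orderOf c ∣ orderOf y := by
      have := orderOf_dvd_of_pow_eq_one h2
      rwa [orderOf_inv] at this
    have : orderOf c ∣ 1 := by
      rw [← hcop]; exact Nat.dvd_gcd hd1 hd2
    have hc1 : c = 1 := orderOf_eq_one_iff.mp (Nat.eq_one_of_dvd_one this)
    rw [hxy, hc1, one_mul]

/-- decomposition of a torsion element into an "m-part-free" and an "m-part" factor -/
private lemma torsion_decomp {G : Type*} [Group G] (m : ℕ) (x : G) (hx : IsOfFinOrder x) :
    ∃ u v : G, x = u * v ∧ IsOfFinOrder u ∧ IsOfFinOrder v ∧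
      Nat.Coprime (orderOf u) m ∧ ∃ k, orderOf v ∣ m ^ k := by
  have hd : 0 < orderOf x := hx.orderOf_pos
  obtain ⟨A, B, k, hAB, hAk, hBm⟩ := nat_decomp m (orderOf x) hd
  have hABpos : 0 < A * B := hAB ▸ hd
  have hBpos : 0 < B := by
    rcases Nat.eq_zero_or_pos B with h | h
    · subst h; simp at hABpos
    · exact h
  -- Bezout
  have hBA : Nat.Coprime B A :=
    Nat.Coprime.coprime_dvd_right hAk (hBm.pow_right k)
  have hgcd : Nat.gcd A B = 1 := hBA.symm
  have hbez : (1 : ℤ) = A * Nat.gcdA A B + B * Nat.gcdB A B := by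
    rw [← Nat.gcd_eq_gcd_ab, hgcd]; norm_num
  set s := Nat.gcdA A B
  set t := Nat.gcdB A B
  refine ⟨x ^ ((A : ℤ) * s), x ^ ((B : ℤ) * t), ?_, ?_, ?_, ?_, k, ?_⟩
  · rw [← zpow_add, ← hbez, zpow_one]
  · exact hx.zpow
  · exact hx.zpow
  · -- orderOf (x ^ (A * s)) ∣ B which is coprime to m
    have hdvdB : orderOf (x ^ ((A : ℤ) * s)) ∣ B := by
      have h1 : (x ^ A) ^ B = 1 := by
        rw [← pow_mul, hAB, pow_orderOf_eq_one]
      have h2 : orderOf (x ^ A) ∣ B := orderOf_dvd_of_pow_eq_one h1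
      have h3 : x ^ ((A : ℤ) * s) = (x ^ A) ^ s := by
        rw [zpow_mul, zpow_natCast]
      rw [h3]
      exact (orderOf_zpow_dvd' _ s).trans h2
    exact Nat.Coprime.coprime_dvd_left hdvdB hBm
  · have h1 : (x ^ B) ^ A = 1 := by
      rw [← pow_mul, mul_comm, hAB, pow_orderOf_eq_one]
    have h2 : orderOf (x ^ B) ∣ A := orderOf_dvd_of_pow_eq_one h1
    have h3 : x ^ ((B : ℤ) * t) = (x ^ B) ^ t := by
      rw [zpow_mul, zpow_natCast]
    rw [h3]
    exact ((orderOf_zpow_dvd' _ t).trans h2).trans hAk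

theorem nilpotent_torsion_normal_abelian (G : Type*) [Group G] [Group.IsNilpotent G]
    (m n : ℕ) (hmn : Nat.Coprime m n)
    (hm : ∀ a b : G, a ^ m * b ^ m = b ^ m * a ^ m)
    (hn : ∀ a b : G, a ^ n * b ^ n = b ^ n * a ^ n) :
    ∃ T : Subgroup G, (∀ x : G, x ∈ T ↔ IsOfFinOrder x) ∧ T.Normal ∧
      ∀ x y : G, x ∈ T → y ∈ T → x * y = y * x := by
  have key : ∀ x y : G, IsOfFinOrder x → IsOfFinOrder y → x * y = y * x := by
    intro x y hx hy
    obtain ⟨u₁, v₁, hx1, hu1, hv1, hcu1, k1, hk1⟩ := torsion_decomp m x hx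
    obtain ⟨u₂, v₂, hx2, hu2, hv2, hcu2, k2, hk2⟩ := torsion_decomp m y hy
    obtain ⟨a1, ha1⟩ := root_of_coprime m u₁ hcu1.symm
    obtain ⟨a2, ha2⟩ := root_of_coprime m u₂ hcu2.symm
    have cuu : Commute u₁ u₂ := by
      show u₁ * u₂ = u₂ * u₁
      rw [← ha1, ← ha2]; exact hm a1 a2
    have hv1n : Nat.Coprime n (orderOf v₁) :=
      (Nat.Coprime.coprime_dvd_left hk1 (hmn.pow_left k1)).symm
    have hv2n : Nat.Coprime n (orderOf v₂) :=
      (Nat.Coprime.coprime_dvd_left hk2 (hmn.pow_left k2)).symm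
    obtain ⟨b1, hb1⟩ := root_of_coprime n v₁ hv1n
    obtain ⟨b2, hb2⟩ := root_of_coprime n v₂ hv2n
    have cvv : Commute v₁ v₂ := by
      show v₁ * v₂ = v₂ * v₁
      rw [← hb1, ← hb2]; exact hn b1 b2
    have cuv12 : Commute u₁ v₂ :=
      coprime_orders_commute G u₁ v₂ hu1 hv2
        (Nat.Coprime.coprime_dvd_right hk2 (hcu1.pow_right k2))
    have cuv21 : Commute u₂ v₁ :=
      (coprime_orders_commute G u₂ v₁ hu2 hv1
        (Nat.Coprime.coprime_dvd_right hk1 (hcu2.pow_right k1)))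
    have : Commute x y := by
      rw [hx1, hx2]
      exact Commute.mul_left (Commute.mul_right cuu cuv12)
        (Commute.mul_right cuv21.symm cvv)
    exact this
  refine ⟨{ carrier := {x | IsOfFinOrder x}
            one_mem' := IsOfFinOrder.one
            mul_mem' := fun {a b} ha hb =>
              (Commute.isOfFinOrder_mul (key a b ha hb) ha hb)
            inv_mem' := fun {a} ha => ha.inv }, fun x => Iff.rfl, ?_, key⟩
  constructor
  intro a ha g
  exact (MulAut.conj g).toMonoidHom.isOfFinOrder ha
end
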